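/- arXiv:1305.6471 — 4 statements merged into one kernel-verified Lean document; each statement's English description precedes it below -/
import Mathlib

section
/- Let G be a Lie group acting smoothly on the right of a manifold P via δ : P × G → P, and let s, σ : U → P be smooth local sections of a submersion π : P → B over an open set U ⊆ B satisfying π ∘ s = π ∘ σ = id_U. Suppose σ = s·g for a smooth map g : U → G, i.e. σ(x) = δ(s(x), g(x)). Then for every x ∈ U and v ∈ T_x B: T_x σ(v) = T_{s(x)}R_{g(x)}(T_x s(v)) + (A)*_{σ(x)}, where A = (g⁻¹dg)_x(v) ∈ 𝔤, R_a = δ(·, a) is the right translation of P by a, and A*_p = T_e δ_p(A) is the value at p of the fundamental vector field of A. -/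
open scoped Manifold
noncomputable section

/-! Basic vocabulary: left/right logarithmic differentials, adjoint representation,
fundamental vector fields of a right action. All tangent spaces of a manifold modelled
on a normed space `E` (boundaryless, with model `ModelWithCorners ℝ E E`) are `E`. -/

variable {EG : Type*} [NormedAddCommGroup EG] [NormedSpace ℝ EG]
  {G : Type*} [TopologicalSpace G] [ChartedSpace EG G] [Group G]
  {EM : Type*} [NormedAddCommGroup EM] [NormedSpace ℝ EM]
  {M : Type*} [TopologicalSpace M] [ChartedSpace EM M]

/-- Left logarithmic (Maurer-Cartan) differential:
`(f⁻¹df)ₓ(v) = T_{f x} λ_{(f x)⁻¹} (T_x f (v))`. -/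
def leftLog (IM : ModelWithCorners ℝ EM EM) (IG : ModelWithCorners ℝ EG EG)
    (f : M → G) (x : M) (v : TangentSpace IM x) : EG :=
  mfderiv IG IG (fun g => (f x)⁻¹ * g) (f x) (mfderiv IM IG f x v)

/-- Right logarithmic differential:
`(df.f⁻¹)ₓ(v) = T_{f x} ρ_{(f x)⁻¹} (T_x f (v))`. -/
def rightLog (IM : ModelWithCorners ℝ EM EM) (IG : ModelWithCorners ℝ EG EG)
    (f : M → G) (x : M) (v : TangentSpace IM x) : EG :=
  mfderiv IG IG (fun g => g * (f x)⁻¹) (f x) (mfderiv IM IG f x v)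

/-- Adjoint representation `Ad(a) = T_e (g ↦ a g a⁻¹)`. -/
def adjRep (IG : ModelWithCorners ℝ EG EG) (a : G) (X : EG) : EG :=
  mfderiv IG IG (fun g => a * g * a⁻¹) (1 : G) X

variable {EB : Type*} [NormedAddCommGroup EB] [NormedSpace ℝ EB]
  {B : Type*} [TopologicalSpace B] [ChartedSpace EB B]
  {EP : Type*} [NormedAddCommGroup EP] [NormedSpace ℝ EP]
  {P : Type*} [TopologicalSpace P] [ChartedSpace EP P]

/-- The value at `p` of the fundamental (Killing) vector field of `A ∈ 𝔤` for the
right action `δ`: `A*_p = T_e δ_p (A)`. -/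
def fundVF (IG : ModelWithCorners ℝ EG EG) (IP : ModelWithCorners ℝ EP EP)
    (δ : P → G → P) (A : EG) (p : P) : EP :=
  mfderiv IG IP (δ p) (1 : G) A

/-- The differential `T_x f` applied to a tangent vector, with all tangent spaces
identified with the model vector spaces. -/
def tDiff {E₁ : Type*} [NormedAddCommGroup E₁] [NormedSpace ℝ E₁]
    {M₁ : Type*} [TopologicalSpace M₁] [ChartedSpace E₁ M₁]
    {E₂ : Type*} [NormedAddCommGroup E₂] [NormedSpace ℝ E₂]
    {M₂ : Type*} [TopologicalSpace M₂] [ChartedSpace E₂ M₂]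
    (I₁ : ModelWithCorners ℝ E₁ E₁) (I₂ : ModelWithCorners ℝ E₂ E₂)
    (f : M₁ → M₂) (x : M₁) (u : E₁) : E₂ :=
  mfderiv I₁ I₂ f x u

/-- If `σ = s·g` for local sections `s, σ` of a submersion `π : P → B` carrying a smooth
right `G`-action `δ` and a smooth map `g : U → G`, then
`T_x σ (v) = T_{s x} R_{g x} (T_x s (v)) + ((g⁻¹dg)ₓ(v))*_{σ x}`. -/
theorem tangent_of_section_mul
    (IG : ModelWithCorners ℝ EG EG) (IB : ModelWithCorners ℝ EB EB)
    (IP : ModelWithCorners ℝ EP EP)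
    [LieGroup IG (⊤ : ℕ∞) G] [IsManifold IB (⊤ : ℕ∞) B] [IsManifold IP (⊤ : ℕ∞) P]
    (δ : P → G → P)
    (hδ : ContMDiff (IP.prod IG) IP (⊤ : ℕ∞) (fun q : P × G => δ q.1 q.2))
    (hδ1 : ∀ p : P, δ p 1 = p)
    (hδmul : ∀ (p : P) (a b : G), δ (δ p a) b = δ p (a * b))
    (π : P → B) (hπ : ContMDiff IP IB (⊤ : ℕ∞) π)
    (hsubm : ∀ p : P, Function.Surjective (mfderiv IP IB π p))
    (U : Set B) (hU : IsOpen U)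
    (s σ : B → P) (g : B → G)
    (hs : ContMDiffOn IB IP (⊤ : ℕ∞) s U) (hσ : ContMDiffOn IB IP (⊤ : ℕ∞) σ U)
    (hg : ContMDiffOn IB IG (⊤ : ℕ∞) g U)
    (hsec : ∀ x ∈ U, π (s x) = x) (hσsec : ∀ x ∈ U, π (σ x) = x)
    (hσs : ∀ x ∈ U, σ x = δ (s x) (g x)) :
    ∀ x ∈ U, ∀ v : TangentSpace IB x,
      tDiff IB IP σ x v =
        tDiff IP IP (fun q => δ q (g x)) (s x) (tDiff IB IP s x v) +
          fundVF IG IP δ (leftLog IB IG g x v) (σ x) := by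
  intro x hx v
  have hxU : U ∈ nhds x := hU.mem_nhds hx
  have hsx : MDifferentiableAt IB IP s x := (hs.contMDiffAt hxU).mdifferentiableAt (by simp)
  have hgx : MDifferentiableAt IB IG g x := (hg.contMDiffAt hxU).mdifferentiableAt (by simp)
  have hδd : MDifferentiable (IP.prod IG) IP (fun q : P × G => δ q.1 q.2) :=
    hδ.mdifferentiable (by simp)
  have heq : σ =ᶠ[nhds x] fun y => δ (s y) (g y) := by
    filter_upwards [hxU] with y hy using hσs y hy
  have hprod : MDifferentiableAt IB (IP.prod IG) (fun y => (s y, g y)) x := hsx.prodMk hgx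
  have hcomp : mfderiv IB IP (fun y => δ (s y) (g y)) x =
      (mfderiv (IP.prod IG) IP (fun q : P × G => δ q.1 q.2) (s x, g x)).comp
        (mfderiv IB (IP.prod IG) (fun y => (s y, g y)) x) :=
    mfderiv_comp x (hδd _) hprod
  have hpair : mfderiv IB (IP.prod IG) (fun y => (s y, g y)) x =
      (mfderiv IB IP s x).prod (mfderiv IB IG g x) := hsx.mfderiv_prod hgx
  -- the second partial derivative rewritten via the fundamental vector field
  have hpartial : ∀ w : EG,
      mfderiv IG IP (fun a => δ (s x) a) (g x) w =
        mfderiv IG IP (δ (σ x)) (1 : G)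
          (mfderiv IG IG (fun a => (g x)⁻¹ * a) (g x) w) := by
    intro w
    have hfun : (fun a : G => δ (s x) a) = (δ (σ x)) ∘ (fun a : G => (g x)⁻¹ * a) := by
      funext a
      simp [Function.comp, hσs x hx, hδmul, mul_inv_cancel_left]
    have hδσ : MDifferentiableAt IG IP (δ (σ x)) (1 : G) := by
      have : MDifferentiableAt IG IP ((fun q : P × G => δ q.1 q.2) ∘ (fun a : G => (σ x, a)))
          (1 : G) :=
        (hδd _).comp _ (mdifferentiableAt_const.prodMk mdifferentiableAt_id)
      exact this
    have hL : MDifferentiableAt IG IG (fun a : G => (g x)⁻¹ * a) (g x) :=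
      ((contMDiff_mul_left (n := ((⊤ : ℕ∞) : WithTop ℕ∞)) (a := (g x)⁻¹)).mdifferentiable (by simp)) (g x)
    rw [hfun]
    exact mfderiv_comp_apply_of_eq (x := g x) hδσ hL (inv_mul_cancel _) w
  have hΔ : MDifferentiableAt (IP.prod IG) IP (fun q : P × G => δ q.1 q.2) (s x, g x) := hδd _
  have key := mfderiv_prod_eq_add_apply
    (v := ((mfderiv IB IP s x v, mfderiv IB IG g x v) :
      TangentSpace (IP.prod IG) ((s x, g x) : P × G))) hΔ
  show mfderiv IB IP σ x v = _
  simp only [tDiff, fundVF, leftLog]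
  rw [heq.mfderiv_eq, hcomp]
  have : (mfderiv IB (IP.prod IG) (fun y => (s y, g y)) x) v =
      ((mfderiv IB IP s x v, mfderiv IB IG g x v) :
        TangentSpace (IP.prod IG) ((s x, g x) : P × G)) := by
    rw [hpair]; rfl
  show (mfderiv (IP.prod IG) IP (fun q : P × G => δ q.1 q.2) (s x, g x))
      ((mfderiv IB (IP.prod IG) (fun y => (s y, g y)) x) v) = _
  rw [this, key]
  congr 1
  exact hpartial _
end
end

section
/- Let ω be a connection form on a principal G-bundle P → B, and let s, σ : U → P be smooth sections over an open U ⊆ B with σ = s·g for a smooth map g : U → G. Then the pulled-back forms satisfy σ*ω = Ad(g⁻¹).(s*ω) + g⁻¹dg, i.e. (σ*ω)_x(v) = Ad(g(x)⁻¹).((s*ω)_x(v)) + (g⁻¹dg)_x(v) for all x ∈ U, v ∈ T_x B. -/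
open scoped Manifold
noncomputable section

/-! Basic vocabulary: left/right logarithmic differentials, adjoint representation,
fundamental vector fields of a right action. All tangent spaces of a manifold modelled
on a normed space `E` (boundaryless, with model `ModelWithCorners ℝ E E`) are `E`. -/

variable {EG : Type*} [NormedAddCommGroup EG] [NormedSpace ℝ EG]
  {G : Type*} [TopologicalSpace G] [ChartedSpace EG G] [Group G]
  {EM : Type*} [NormedAddCommGroup EM] [NormedSpace ℝ EM]
  {M : Type*} [TopologicalSpace M] [ChartedSpace EM M]

variable {EB : Type*} [NormedAddCommGroup EB] [NormedSpace ℝ EB]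
  {B : Type*} [TopologicalSpace B] [ChartedSpace EB B]
  {EP : Type*} [NormedAddCommGroup EP] [NormedSpace ℝ EP]
  {P : Type*} [TopologicalSpace P] [ChartedSpace EP P]

/-- For a connection form `ω` on a principal `G`-bundle `P → B` and sections `σ = s·g`
over `U`, the pullbacks satisfy `σ*ω = Ad(g⁻¹).(s*ω) + g⁻¹dg`. -/
theorem pullback_connection_form_section_mul
    (IG : ModelWithCorners ℝ EG EG) (IB : ModelWithCorners ℝ EB EB)
    (IP : ModelWithCorners ℝ EP EP)
    [LieGroup IG (⊤ : ℕ∞) G] [IsManifold IB (⊤ : ℕ∞) B] [IsManifold IP (⊤ : ℕ∞) P]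
    -- the principal bundle structure: a smooth, free right action, fiberwise transitive
    -- over the smooth surjective submersion π
    (δ : P → G → P)
    (hδ : ContMDiff (IP.prod IG) IP (⊤ : ℕ∞) (fun q : P × G => δ q.1 q.2))
    (hδ1 : ∀ p : P, δ p 1 = p)
    (hδmul : ∀ (p : P) (a b : G), δ (δ p a) b = δ p (a * b))
    (π : P → B) (hπ : ContMDiff IP IB (⊤ : ℕ∞) π) (hπsurj : Function.Surjective π)
    (hsubm : ∀ p : P, Function.Surjective (mfderiv IP IB π p))
    (hπδ : ∀ (p : P) (a : G), π (δ p a) = π p)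
    (hfree : ∀ (p : P) (a : G), δ p a = p → a = 1)
    (htrans : ∀ p q : P, π p = π q → ∃ a : G, q = δ p a)
    -- the connection form ω ∈ Λ¹(P, 𝔤): ω(X*) = X and R_a*ω = Ad(a⁻¹).ω
    (ω : P → (EP →L[ℝ] EG))
    (hω1 : ∀ (p : P) (X : EG), ω p (fundVF IG IP δ X p) = X)
    (hω2 : ∀ (a : G) (p : P) (u : EP),
      ω (δ p a) (tDiff IP IP (fun q => δ q a) p u) = adjRep IG a⁻¹ (ω p u))
    -- local sections with σ = s·g
    (U : Set B) (hU : IsOpen U)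
    (s σ : B → P) (g : B → G)
    (hs : ContMDiffOn IB IP (⊤ : ℕ∞) s U) (hσ : ContMDiffOn IB IP (⊤ : ℕ∞) σ U)
    (hg : ContMDiffOn IB IG (⊤ : ℕ∞) g U)
    (hsec : ∀ x ∈ U, π (s x) = x) (hσsec : ∀ x ∈ U, π (σ x) = x)
    (hσs : ∀ x ∈ U, σ x = δ (s x) (g x)) :
    ∀ x ∈ U, ∀ v : TangentSpace IB x,
      ω (σ x) (tDiff IB IP σ x v) =
        adjRep IG (g x)⁻¹ (ω (s x) (tDiff IB IP s x v)) + leftLog IB IG g x v := by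
  intro x hx v
  -- differentiability facts
  have hmemU : U ∈ nhds x := hU.mem_nhds hx
  have hsx : MDifferentiableAt IB IP s x :=
    ((hs.contMDiffAt hmemU).mdifferentiableAt (by simp))
  have hgx : MDifferentiableAt IB IG g x :=
    ((hg.contMDiffAt hmemU).mdifferentiableAt (by simp))
  set F : P × G → P := fun q => δ q.1 q.2 with hF
  have hFd : MDifferentiable (IP.prod IG) IP F := hδ.mdifferentiable (by simp)
  have hpair : MDifferentiableAt IB (IP.prod IG) (fun y => (s y, g y)) x :=
    hsx.prodMk hgx
  -- σ agrees with F ∘ pair near x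
  have hσeq : σ =ᶠ[nhds x] (F ∘ fun y => (s y, g y)) := by
    filter_upwards [hmemU] with y hy
    exact hσs y hy
  have hσx : σ x = δ (s x) (g x) := hσs x hx
  -- compute mfderiv σ
  have h1 : mfderiv IB IP σ x v =
      mfderiv (IP.prod IG) IP F (s x, g x)
        (mfderiv IB IP s x v, mfderiv IB IG g x v) := by
    rw [hσeq.mfderiv_eq, mfderiv_comp x (hFd _) hpair]
    show mfderiv (IP.prod IG) IP F (s x, g x)
      (mfderiv IB (IP.prod IG) (fun y => (s y, g y)) x v) = _
    rw [hsx.mfderiv_prod hgx]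
    rfl
  have h2 : mfderiv (IP.prod IG) IP F (s x, g x)
        (mfderiv IB IP s x v, mfderiv IB IG g x v) =
      mfderiv IP IP (fun p => δ p (g x)) (s x) (mfderiv IB IP s x v) +
      mfderiv IG IP (fun a => δ (s x) a) (g x) (mfderiv IB IG g x v) :=
    mfderiv_prod_eq_add_apply (hFd (s x, g x))
  -- second summand is the fundamental vector field of leftLog at σ x
  have hfun : (fun a => δ (s x) a) = (fun b => δ (σ x) ((g x)⁻¹ * b)) := by
    funext b
    rw [hσx, hδmul]
    congr 1
    group
  have hδσ : MDifferentiableAt IG IP (δ (σ x)) 1 := by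
    have : ContMDiff IG IP ((⊤ : ℕ∞) : WithTop ℕ∞) (δ (σ x)) :=
      hδ.comp (contMDiff_const.prodMk contMDiff_id)
    exact (this.mdifferentiable (by simp)) 1
  have hlm : MDifferentiableAt IG IG (fun b => (g x)⁻¹ * b) (g x) :=
    ((contMDiff_mul_left (n := ((⊤ : ℕ∞) : WithTop ℕ∞))).mdifferentiable (by simp)) (g x)
  have h3 : mfderiv IG IP (fun a => δ (s x) a) (g x) (mfderiv IB IG g x v) =
      fundVF IG IP δ (leftLog IB IG g x v) (σ x) := by
    rw [hfun]
    have : (fun b => δ (σ x) ((g x)⁻¹ * b)) = (δ (σ x)) ∘ (fun b => (g x)⁻¹ * b) := rfl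
    rw [this, mfderiv_comp_of_eq hδσ hlm (inv_mul_cancel (g x))]
    show mfderiv IG IP (δ (σ x)) ((g x)⁻¹ * g x)
      (mfderiv IG IG (fun b => (g x)⁻¹ * b) (g x) (mfderiv IB IG g x v)) = _
    rw [inv_mul_cancel (g x)]
    rfl
  show ω (σ x) (mfderiv IB IP σ x v) = _
  rw [h1, h2]
  refine ((ω (σ x)).map_add _ _).trans ?_
  rw [h3, hω1]
  congr 1
  have := hω2 (g x) (s x) (mfderiv IB IP s x v)
  rw [← hσx] at this
  exact this
end
end

section
/- Let (f, φ, id_B) : (P, G, B, π) → (Q, H, B, π′) be a principal bundle morphism, ω and θ connection forms on P and Q respectively, and {ω_α}, {θ_α} their local connection forms with respect to trivializations over a common open cover {U_α}, with h_α : U_α → H defined by f ∘ s_α = t_α·h_α. If ω and θ are (f, φ, id_B)-related, i.e. f*θ = φ̄ω, then φ̄ω_α = Ad(h_α⁻¹).θ_α + h_α⁻¹dh_α on U_α for every α. -/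
open scoped Manifold
noncomputable section

/-! Basic vocabulary: left/right logarithmic differentials, adjoint representation,
fundamental vector fields of a right action. All tangent spaces of a manifold modelled
on a normed space `E` (boundaryless, with model `ModelWithCorners ℝ E E`) are `E`. -/

variable {EG : Type*} [NormedAddCommGroup EG] [NormedSpace ℝ EG]
  {G : Type*} [TopologicalSpace G] [ChartedSpace EG G] [Group G]
  {EM : Type*} [NormedAddCommGroup EM] [NormedSpace ℝ EM]
  {M : Type*} [TopologicalSpace M] [ChartedSpace EM M]

variable {EB : Type*} [NormedAddCommGroup EB] [NormedSpace ℝ EB]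
  {B : Type*} [TopologicalSpace B] [ChartedSpace EB B]
  {EP : Type*} [NormedAddCommGroup EP] [NormedSpace ℝ EP]
  {P : Type*} [TopologicalSpace P] [ChartedSpace EP P]

variable {EH : Type*} [NormedAddCommGroup EH] [NormedSpace ℝ EH]
  {H : Type*} [TopologicalSpace H] [ChartedSpace EH H] [Group H]
  {EQ : Type*} [NormedAddCommGroup EQ] [NormedSpace ℝ EQ]
  {Q : Type*} [TopologicalSpace Q] [ChartedSpace EQ Q]

/-- The induced Lie algebra morphism `φ̄ = T_e φ` of a Lie group morphism `φ : G → H`. -/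
def lieMorphDiff (IG : ModelWithCorners ℝ EG EG) (IH : ModelWithCorners ℝ EH EH)
    (φ : G → H) (X : EG) : EH :=
  mfderiv IG IH φ (1 : G) X


/-- Leibniz rule for a binary smooth map: the derivative of `y ↦ D (F y, G y)` is the
sum of the two partial derivatives. -/
theorem mfderiv_binary_apply'
    {E₁ : Type*} [NormedAddCommGroup E₁] [NormedSpace ℝ E₁]
    {M₁ : Type*} [TopologicalSpace M₁] [ChartedSpace E₁ M₁]
    {E₂ : Type*} [NormedAddCommGroup E₂] [NormedSpace ℝ E₂]
    {M₂ : Type*} [TopologicalSpace M₂] [ChartedSpace E₂ M₂]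
    {E₃ : Type*} [NormedAddCommGroup E₃] [NormedSpace ℝ E₃]
    {M₃ : Type*} [TopologicalSpace M₃] [ChartedSpace E₃ M₃]
    {E₄ : Type*} [NormedAddCommGroup E₄] [NormedSpace ℝ E₄]
    {M₄ : Type*} [TopologicalSpace M₄] [ChartedSpace E₄ M₄]
    (I₁ : ModelWithCorners ℝ E₁ E₁) (I₂ : ModelWithCorners ℝ E₂ E₂)
    (I₃ : ModelWithCorners ℝ E₃ E₃) (I₄ : ModelWithCorners ℝ E₄ E₄)
    [IsManifold I₁ (⊤ : ℕ∞) M₁] [IsManifold I₂ (⊤ : ℕ∞) M₂]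
    [IsManifold I₃ (⊤ : ℕ∞) M₃] [IsManifold I₄ (⊤ : ℕ∞) M₄]
    (D : M₂ × M₃ → M₄) (F : M₁ → M₂) (G : M₁ → M₃) (x : M₁)
    (hD : MDifferentiableAt (I₂.prod I₃) I₄ D (F x, G x))
    (hF : MDifferentiableAt I₁ I₂ F x) (hG : MDifferentiableAt I₁ I₃ G x) (v : E₁) :
    mfderiv I₁ I₄ (fun y => D (F y, G y)) x v =
      mfderiv I₂ I₄ (fun z => D (z, G x)) (F x) (mfderiv I₁ I₂ F x v) +
        mfderiv I₃ I₄ (fun z => D (F x, z)) (G x) (mfderiv I₁ I₃ G x v) := by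
  have hFG : MDifferentiableAt I₁ (I₂.prod I₃) (fun y => (F y, G y)) x := hF.prodMk hG
  have hcomp : mfderiv I₁ I₄ (fun y => D (F y, G y)) x =
      (mfderiv (I₂.prod I₃) I₄ D (F x, G x)).comp
        (mfderiv I₁ (I₂.prod I₃) (fun y => (F y, G y)) x) := mfderiv_comp x hD hFG
  have hpair : mfderiv I₁ (I₂.prod I₃) (fun y => (F y, G y)) x v =
      (mfderiv I₁ I₂ F x v, mfderiv I₁ I₃ G x v) := by
    rw [hF.mfderiv_prod hG]; rfl
  have h1 : mfderiv I₁ I₄ (fun y => D (F y, G y)) x v =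
      mfderiv (I₂.prod I₃) I₄ D (F x, G x)
        (mfderiv I₁ (I₂.prod I₃) (fun y => (F y, G y)) x v) := by rw [hcomp]; rfl
  rw [h1, hpair]
  exact mfderiv_prod_eq_add_apply hD

/-- Theorem 4.1, direct part: if `ω` and `θ` are `(f, φ, id_B)`-related, i.e.
`f*θ = φ̄ω`, then `φ̄ω_α = Ad(h_α⁻¹).θ_α + h_α⁻¹dh_α` on each `U_α`. -/
theorem related_implies_local_condition {ι : Type*}
    (IG : ModelWithCorners ℝ EG EG) (IH : ModelWithCorners ℝ EH EH)
    (IB : ModelWithCorners ℝ EB EB)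
    (IP : ModelWithCorners ℝ EP EP) (IQ : ModelWithCorners ℝ EQ EQ)
    [LieGroup IG (⊤ : ℕ∞) G] [LieGroup IH (⊤ : ℕ∞) H] [IsManifold IB (⊤ : ℕ∞) B]
    [IsManifold IP (⊤ : ℕ∞) P] [IsManifold IQ (⊤ : ℕ∞) Q]
    -- smooth free actions on P and Q, fiberwise transitive over the projections
    (δP : P → G → P) (δQ : Q → H → Q)
    (hδP : ContMDiff (IP.prod IG) IP (⊤ : ℕ∞) (fun z : P × G => δP z.1 z.2))
    (hδQ : ContMDiff (IQ.prod IH) IQ (⊤ : ℕ∞) (fun z : Q × H => δQ z.1 z.2))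
    (hδP1 : ∀ p : P, δP p 1 = p)
    (hδPmul : ∀ (p : P) (a b : G), δP (δP p a) b = δP p (a * b))
    (hδQ1 : ∀ q : Q, δQ q 1 = q)
    (hδQmul : ∀ (q : Q) (a b : H), δQ (δQ q a) b = δQ q (a * b))
    (hδPfree : ∀ (p : P) (a : G), δP p a = p → a = 1)
    (hδQfree : ∀ (q : Q) (a : H), δQ q a = q → a = 1)
    (πP : P → B) (πQ : Q → B)
    (hπP : ContMDiff IP IB (⊤ : ℕ∞) πP) (hπQ : ContMDiff IQ IB (⊤ : ℕ∞) πQ)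
    (hπPδ : ∀ (p : P) (a : G), πP (δP p a) = πP p)
    (hπQδ : ∀ (q : Q) (a : H), πQ (δQ q a) = πQ q)
    -- the pb-morphism (f, φ, id_B)
    (f : P → Q) (φ : G → H) (hf : ContMDiff IP IQ (⊤ : ℕ∞) f)
    (hφ : ContMDiff IG IH (⊤ : ℕ∞) φ) (hφmul : ∀ a b : G, φ (a * b) = φ a * φ b)
    (hπf : ∀ p : P, πQ (f p) = πP p)
    (hequiv : ∀ (p : P) (a : G), f (δP p a) = δQ (f p) (φ a))
    -- connection forms ω on P and θ on Q
    (ω : P → (EP →L[ℝ] EG)) (θ : Q → (EQ →L[ℝ] EH))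
    (hω1 : ∀ (p : P) (X : EG), ω p (fundVF IG IP δP X p) = X)
    (hω2 : ∀ (a : G) (p : P) (u : EP),
      ω (δP p a) (tDiff IP IP (fun r => δP r a) p u) = adjRep IG a⁻¹ (ω p u))
    (hθ1 : ∀ (q : Q) (X : EH), θ q (fundVF IH IQ δQ X q) = X)
    (hθ2 : ∀ (a : H) (q : Q) (u : EQ),
      θ (δQ q a) (tDiff IQ IQ (fun r => δQ r a) q u) = adjRep IH a⁻¹ (θ q u))
    -- trivializing data over a common open cover of B
    (U : ι → Set B) (hUopen : ∀ α, IsOpen (U α)) (hUcover : ⋃ α, U α = Set.univ)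
    (s : ι → B → P) (hssmooth : ∀ α, ContMDiffOn IB IP (⊤ : ℕ∞) (s α) (U α))
    (hsecP : ∀ α, ∀ x ∈ U α, πP (s α x) = x)
    (t : ι → B → Q) (htsmooth : ∀ α, ContMDiffOn IB IQ (⊤ : ℕ∞) (t α) (U α))
    (hsecQ : ∀ α, ∀ x ∈ U α, πQ (t α x) = x)
    (γ : ι → P → G)
    (hγ : ∀ α, ∀ p : P, πP p ∈ U α → p = δP (s α (πP p)) (γ α p))
    (hγsmooth : ∀ α, ContMDiffOn IP IG (⊤ : ℕ∞) (γ α) (πP ⁻¹' U α))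
    (κ : ι → Q → H)
    (hκ : ∀ α, ∀ q : Q, πQ q ∈ U α → q = δQ (t α (πQ q)) (κ α q))
    (hκsmooth : ∀ α, ContMDiffOn IQ IH (⊤ : ℕ∞) (κ α) (πQ ⁻¹' U α))
    (hα : ι → B → H) (hαsmooth : ∀ α, ContMDiffOn IB IH (⊤ : ℕ∞) (hα α) (U α))
    (hαdef : ∀ α, ∀ x ∈ U α, f (s α x) = δQ (t α x) (hα α x))
    -- relatedness: f*θ = φ̄ω
    (hrel : ∀ (p : P) (u : EP),
      θ (f p) (tDiff IP IQ f p u) = lieMorphDiff IG IH φ (ω p u)) :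
    ∀ α, ∀ x ∈ U α, ∀ v : TangentSpace IB x,
      lieMorphDiff IG IH φ (ω (s α x) (tDiff IB IP (s α) x v)) =
        adjRep IH (hα α x)⁻¹ (θ (t α x) (tDiff IB IQ (t α) x v)) +
          leftLog IB IH (hα α) x v := by

  intro α x hx v
  have hxU : U α ∈ nhds x := (hUopen α).mem_nhds hx
  have hs : MDifferentiableAt IB IP (s α) x :=
    ((hssmooth α).contMDiffAt hxU).mdifferentiableAt (by simp)
  have ht : MDifferentiableAt IB IQ (t α) x :=
    ((htsmooth α).contMDiffAt hxU).mdifferentiableAt (by simp)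
  have hh : MDifferentiableAt IB IH (hα α) x :=
    ((hαsmooth α).contMDiffAt hxU).mdifferentiableAt (by simp)
  have hfd : MDifferentiableAt IP IQ f (s α x) := hf.mdifferentiableAt (by simp)
  have hδQd : MDifferentiableAt (IQ.prod IH) IQ (fun z : Q × H => δQ z.1 z.2)
      (t α x, hα α x) := hδQ.mdifferentiableAt (by simp)
  -- chain rule for `f ∘ s α`
  have hL : mfderiv IB IQ (fun y => f (s α y)) x =
      (mfderiv IP IQ f (s α x)).comp (mfderiv IB IP (s α) x) := mfderiv_comp x hfd hs
  -- eventual equality `f ∘ s α = δQ (t α ·) (hα α ·)` near `x`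
  have heq : (fun y => f (s α y)) =ᶠ[nhds x] (fun y => δQ (t α y) (hα α y)) :=
    Filter.eventuallyEq_of_mem hxU (fun y hy => hαdef α y hy)
  -- Leibniz rule
  have hR : mfderiv IB IQ (fun y => δQ (t α y) (hα α y)) x v =
      mfderiv IQ IQ (fun z => δQ z (hα α x)) (t α x) (mfderiv IB IQ (t α) x v) +
        mfderiv IH IQ (fun z => δQ (t α x) z) (hα α x) (mfderiv IB IH (hα α) x v) :=
    mfderiv_binary_apply' IB IQ IH IQ (fun z : Q × H => δQ z.1 z.2) (t α) (hα α) x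
      hδQd ht hh v
  -- the second term is a fundamental vector field evaluated on the left log derivative
  have hfun : (fun z : H => δQ (t α x) z) =
      (fun b : H => δQ (δQ (t α x) (hα α x)) b) ∘ (fun g : H => (hα α x)⁻¹ * g) := by
    funext g
    simp only [Function.comp_apply, hδQmul, mul_inv_cancel_left]
  have hpart1 : MDifferentiableAt IH IQ (fun b : H => δQ (δQ (t α x) (hα α x)) b)
      (1 : H) :=
    (hδQ.comp (contMDiff_const.prodMk contMDiff_id)).mdifferentiableAt (by simp)
  have hmul : MDifferentiableAt IH IH (fun g : H => (hα α x)⁻¹ * g) (hα α x) :=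
    (contMDiff_mul_left (n := ((⊤ : ℕ∞) : WithTop ℕ∞))).mdifferentiableAt (by simp)
  have hT2 : mfderiv IH IQ (fun z : H => δQ (t α x) z) (hα α x)
        (mfderiv IB IH (hα α) x v) =
      fundVF IH IQ δQ (leftLog IB IH (hα α) x v) (δQ (t α x) (hα α x)) := by
    have hc : mfderiv IH IQ
        ((fun b : H => δQ (δQ (t α x) (hα α x)) b) ∘ (fun g : H => (hα α x)⁻¹ * g))
        (hα α x) (mfderiv IB IH (hα α) x v) =
        mfderiv IH IQ (fun b : H => δQ (δQ (t α x) (hα α x)) b) (1 : H)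
          (mfderiv IH IH (fun g : H => (hα α x)⁻¹ * g) (hα α x)
            (mfderiv IB IH (hα α) x v)) :=
      mfderiv_comp_apply_of_eq (hα α x) hpart1 hmul (inv_mul_cancel (hα α x)) _
    rw [hfun]
    exact hc
  -- assemble
  have key := (hrel (s α x) (tDiff IB IP (s α) x v)).symm
  rw [key]
  have harg : tDiff IP IQ f (s α x) (tDiff IB IP (s α) x v) =
      mfderiv IB IQ (fun y => δQ (t α y) (hα α y)) x v := by
    rw [← heq.mfderiv_eq, hL]; rfl
  rw [harg, hR]
  erw [map_add]
  rw [hT2]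
  have hfs : f (s α x) = δQ (t α x) (hα α x) := hαdef α x hx
  rw [hfs]
  have h1 : θ (δQ (t α x) (hα α x))
      (fundVF IH IQ δQ (leftLog IB IH (hα α) x v) (δQ (t α x) (hα α x))) =
      leftLog IB IH (hα α) x v := hθ1 _ _
  have h2 : θ (δQ (t α x) (hα α x))
      (mfderiv IQ IQ (fun z => δQ z (hα α x)) (t α x) (mfderiv IB IQ (t α) x v)) =
      adjRep IH (hα α x)⁻¹ (θ (t α x) (tDiff IB IQ (t α) x v)) :=
    hθ2 (hα α x) (t α x) (mfderiv IB IQ (t α) x v)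
  rw [h1, h2]
end
end

section
/- Let (f, φ, id_B) : (P, G, B, π) → (Q, H, B, π′) be a principal bundle morphism, ω and θ connection forms on P and Q, with local connection forms {ω_α}, {θ_α} over a common trivializing cover {U_α}, and h_α : U_α → H defined by f ∘ s_α = t_α·h_α. If φ̄ω_α = Ad(h_α⁻¹).θ_α + h_α⁻¹dh_α holds on U_α for every α, then ω and θ are (f, φ, id_B)-related: f*θ = φ̄ω. -/
set_option linter.unusedSectionVars false
set_option maxHeartbeats 1000000

open scoped Manifold
noncomputable section

/-! Basic vocabulary: left/right logarithmic differentials, adjoint representation,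
fundamental vector fields of a right action. All tangent spaces of a manifold modelled
on a normed space `E` (boundaryless, with model `ModelWithCorners ℝ E E`) are `E`. -/

variable {EG : Type*} [NormedAddCommGroup EG] [NormedSpace ℝ EG]
  {G : Type*} [TopologicalSpace G] [ChartedSpace EG G] [Group G]
  {EM : Type*} [NormedAddCommGroup EM] [NormedSpace ℝ EM]
  {M : Type*} [TopologicalSpace M] [ChartedSpace EM M]

variable {EB : Type*} [NormedAddCommGroup EB] [NormedSpace ℝ EB]
  {B : Type*} [TopologicalSpace B] [ChartedSpace EB B]
  {EP : Type*} [NormedAddCommGroup EP] [NormedSpace ℝ EP]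
  {P : Type*} [TopologicalSpace P] [ChartedSpace EP P]

variable {EH : Type*} [NormedAddCommGroup EH] [NormedSpace ℝ EH]
  {H : Type*} [TopologicalSpace H] [ChartedSpace EH H] [Group H]
  {EQ : Type*} [NormedAddCommGroup EQ] [NormedSpace ℝ EQ]
  {Q : Type*} [TopologicalSpace Q] [ChartedSpace EQ Q]

theorem mfderiv_binary
    {E₁ E₂ E₃ EM : Type*} [NormedAddCommGroup E₁] [NormedSpace ℝ E₁]
    [NormedAddCommGroup E₂] [NormedSpace ℝ E₂] [NormedAddCommGroup E₃] [NormedSpace ℝ E₃]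
    [NormedAddCommGroup EM] [NormedSpace ℝ EM]
    {M₁ M₂ M₃ M : Type*} [TopologicalSpace M₁] [ChartedSpace E₁ M₁]
    [TopologicalSpace M₂] [ChartedSpace E₂ M₂] [TopologicalSpace M₃] [ChartedSpace E₃ M₃]
    [TopologicalSpace M] [ChartedSpace EM M]
    (I₁ : ModelWithCorners ℝ E₁ E₁) (I₂ : ModelWithCorners ℝ E₂ E₂)
    (I₃ : ModelWithCorners ℝ E₃ E₃) (IM : ModelWithCorners ℝ EM EM)
    (F : M₂ → M₃ → M₁) (hF : ContMDiff (I₂.prod I₃) I₁ (⊤ : ℕ∞) fun z : M₂ × M₃ => F z.1 z.2)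
    (c : M → M₂) (k : M → M₃) (p : M)
    (hc : MDifferentiableAt IM I₂ c p) (hk : MDifferentiableAt IM I₃ k p) (u : EM) :
    mfderiv IM I₁ (fun r => F (c r) (k r)) p u =
      mfderiv I₂ I₁ (fun z => F z (k p)) (c p) (mfderiv IM I₂ c p u) +
      mfderiv I₃ I₁ (fun z => F (c p) z) (k p) (mfderiv IM I₃ k p u) := by
  have hFd : MDifferentiableAt (I₂.prod I₃) I₁ (fun z : M₂ × M₃ => F z.1 z.2) (c p, k p) :=
    (hF (c p, k p)).mdifferentiableAt (by simp)
  have h1 : (fun r => F (c r) (k r)) =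
      (fun z : M₂ × M₃ => F z.1 z.2) ∘ (fun r => (c r, k r)) := rfl
  rw [h1, mfderiv_comp p hFd (hc.prodMk hk), hc.mfderiv_prod hk,
    mfderiv_prod_eq_add_comp hFd]
  rfl

section Lie
variable (IG : ModelWithCorners ℝ EG EG) (IH : ModelWithCorners ℝ EH EH)
  (IM : ModelWithCorners ℝ EM EM) [LieGroup IG (⊤ : ℕ∞) G] [LieGroup IH (⊤ : ℕ∞) H]

theorem contMDiff_conj (a : G) : ContMDiff IG IG (⊤ : ℕ∞) (fun g => a * g * a⁻¹) := by
  have : (fun g : G => a * g * a⁻¹) = (fun g : G => g * a⁻¹) ∘ (fun g : G => a * g) := rfl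
  rw [this]; exact contMDiff_mul_right.comp contMDiff_mul_left

theorem adjRep_add (a : G) (X Y : EG) :
    adjRep IG a (X + Y) = adjRep IG a X + adjRep IG a Y :=
  map_add (mfderiv IG IG (fun g => a * g * a⁻¹) (1 : G)) X Y

theorem lieMorphDiff_add (φ : G → H) (X Y : EG) :
    lieMorphDiff IG IH φ (X + Y) = lieMorphDiff IG IH φ X + lieMorphDiff IG IH φ Y :=
  map_add (mfderiv IG IH φ (1 : G)) X Y

theorem adjRep_mul (a b : G) (X : EG) :
    adjRep IG a (adjRep IG b X) = adjRep IG (a * b) X := by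
  unfold adjRep
  have h1 : MDifferentiableAt IG IG (fun g => a * g * a⁻¹) (1 : G) :=
    ((contMDiff_conj IG a) _).mdifferentiableAt (by simp)
  have h2 : MDifferentiableAt IG IG (fun g => b * g * b⁻¹) (1 : G) :=
    ((contMDiff_conj IG b) _).mdifferentiableAt (by simp)
  have hval : b * (1:G) * b⁻¹ = 1 := by group
  rw [← mfderiv_comp_apply_of_eq (1:G) h1 h2 hval X]
  have heq : ((fun g => a * g * a⁻¹) ∘ (fun g => b * g * b⁻¹)) =
      (fun g : G => (a*b) * g * (a*b)⁻¹) := by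
    funext g; simp [Function.comp, mul_assoc, mul_inv_rev]
  rw [heq]

theorem morph_one (φ : G → H) (hφmul : ∀ a b : G, φ (a * b) = φ a * φ b) : φ 1 = 1 := by
  have := hφmul 1 1; rw [mul_one] at this
  exact right_eq_mul.mp this

theorem morph_inv (φ : G → H) (hφmul : ∀ a b : G, φ (a * b) = φ a * φ b) (a : G) :
    φ a⁻¹ = (φ a)⁻¹ := by
  have := hφmul a a⁻¹
  rw [mul_inv_cancel, morph_one φ hφmul] at this
  exact eq_inv_of_mul_eq_one_right this.symm

/-- `φ̄ ∘ Ad(a) = Ad(φ a) ∘ φ̄`. -/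
theorem lieMorphDiff_adj (φ : G → H) (hφ : ContMDiff IG IH (⊤ : ℕ∞) φ)
    (hφmul : ∀ a b : G, φ (a * b) = φ a * φ b) (a : G) (X : EG) :
    lieMorphDiff IG IH φ (adjRep IG a X) = adjRep IH (φ a) (lieMorphDiff IG IH φ X) := by
  unfold lieMorphDiff adjRep
  have hφd : MDifferentiableAt IG IH φ (1 : G) := (hφ _).mdifferentiableAt (by simp)
  have h2 : MDifferentiableAt IG IG (fun g => a * g * a⁻¹) (1 : G) :=
    ((contMDiff_conj IG a) _).mdifferentiableAt (by simp)
  have h3 : MDifferentiableAt IH IH (fun h => φ a * h * (φ a)⁻¹) (1 : H) :=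
    ((contMDiff_conj IH (φ a)) _).mdifferentiableAt (by simp)
  have hval : a * (1:G) * a⁻¹ = 1 := by group
  rw [← mfderiv_comp_apply_of_eq (1:G) hφd h2 hval X,
    ← mfderiv_comp_apply_of_eq (1:G) h3 hφd (morph_one φ hφmul) X]
  congr 1
  apply Filter.EventuallyEq.mfderiv_eq
  filter_upwards with g
  simp only [Function.comp, hφmul, morph_inv φ hφmul]

/-- `φ̄ (γ⁻¹dγ) = (φ∘γ)⁻¹ d(φ∘γ)`. -/
theorem lieMorphDiff_leftLog (φ : G → H) (hφ : ContMDiff IG IH (⊤ : ℕ∞) φ)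
    (hφmul : ∀ a b : G, φ (a * b) = φ a * φ b) (γ : M → G) (x : M)
    (hγ : MDifferentiableAt IM IG γ x) (v : EM) :
    lieMorphDiff IG IH φ (leftLog IM IG γ x v) = leftLog IM IH (φ ∘ γ) x v := by
  unfold lieMorphDiff leftLog
  have hφd1 : MDifferentiableAt IG IH φ (1 : G) := (hφ _).mdifferentiableAt (by simp)
  have hφdg : MDifferentiableAt IG IH φ (γ x) := (hφ _).mdifferentiableAt (by simp)
  have hlG : MDifferentiableAt IG IG (fun g => (γ x)⁻¹ * g) (γ x) :=
    mdifferentiableAt_mul_left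
  have hlH : MDifferentiableAt IH IH (fun h => (φ (γ x))⁻¹ * h) (φ (γ x)) :=
    mdifferentiableAt_mul_left
  have hval : (γ x)⁻¹ * γ x = 1 := inv_mul_cancel _
  rw [← mfderiv_comp_apply_of_eq (γ x) hφd1 hlG hval (mfderiv IM IG γ x v)]
  have heq : (φ ∘ fun g => (γ x)⁻¹ * g) = (fun h => (φ (γ x))⁻¹ * h) ∘ φ := by
    funext g; simp [Function.comp, hφmul, morph_inv φ hφmul]
  rw [heq, mfderiv_comp_apply (γ x) hlH hφdg (mfderiv IM IG γ x v)]
  simp only [Function.comp_apply]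
  congr 1
  exact (mfderiv_comp_apply x hφdg hγ v).symm

/-- chain rule for `leftLog` under precomposition. -/
theorem leftLog_comp {EB : Type*} [NormedAddCommGroup EB] [NormedSpace ℝ EB]
    {B : Type*} [TopologicalSpace B] [ChartedSpace EB B]
    (IB : ModelWithCorners ℝ EB EB) (π : M → B) (g : B → G) (x : M)
    (hπ : MDifferentiableAt IM IB π x) (hg : MDifferentiableAt IB IG g (π x)) (v : EM) :
    leftLog IM IG (fun r => g (π r)) x v = leftLog IB IG g (π x) (mfderiv IM IB π x v) := by
  unfold leftLog
  have : (fun r => g (π r)) = g ∘ π := rfl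
  rw [this, mfderiv_comp_apply x hg hπ v]
  rfl

/-- Product rule for the left logarithmic derivative. -/
theorem leftLog_mul (A B : M → G) (x : M)
    (hA : MDifferentiableAt IM IG A x) (hB : MDifferentiableAt IM IG B x) (v : EM) :
    leftLog IM IG (fun r => A r * B r) x v =
      adjRep IG (B x)⁻¹ (leftLog IM IG A x v) + leftLog IM IG B x v := by
  have hlam : MDifferentiableAt IG IG (fun g => (A x * B x)⁻¹ * g) (A x * B x) :=
    mdifferentiableAt_mul_left
  have hmr : MDifferentiableAt IG IG (fun z => z * B x) (A x) := mdifferentiableAt_mul_right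
  have hml : MDifferentiableAt IG IG (fun z => A x * z) (B x) := mdifferentiableAt_mul_left
  have hconj : MDifferentiableAt IG IG (fun g => (B x)⁻¹ * g * ((B x)⁻¹)⁻¹) (1 : G) :=
    ((contMDiff_conj IG (B x)⁻¹) _).mdifferentiableAt (by simp)
  have hlA : MDifferentiableAt IG IG (fun g => (A x)⁻¹ * g) (A x) := mdifferentiableAt_mul_left
  have hT1 : mfderiv IG IG (fun g => (A x * B x)⁻¹ * g) (A x * B x)
      (mfderiv IG IG (fun z => z * B x) (A x) (mfderiv IM IG A x v)) =
      adjRep IG (B x)⁻¹ (leftLog IM IG A x v) := by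
    rw [← mfderiv_comp_apply_of_eq (A x) hlam hmr rfl (mfderiv IM IG A x v)]
    unfold adjRep leftLog
    rw [← mfderiv_comp_apply_of_eq (A x) hconj hlA (inv_mul_cancel (A x)) (mfderiv IM IG A x v)]
    have hfun : ((fun g => (A x * B x)⁻¹ * g) ∘ fun z => z * B x) =
        ((fun g => (B x)⁻¹ * g * ((B x)⁻¹)⁻¹) ∘ fun g => (A x)⁻¹ * g) := by
      funext z; simp [Function.comp, mul_inv_rev, mul_assoc]
    rw [hfun]
  have hT2 : mfderiv IG IG (fun g => (A x * B x)⁻¹ * g) (A x * B x)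
      (mfderiv IG IG (fun z => A x * z) (B x) (mfderiv IM IG B x v)) =
      leftLog IM IG B x v := by
    rw [← mfderiv_comp_apply_of_eq (B x) hlam hml rfl (mfderiv IM IG B x v)]
    unfold leftLog
    have hfun : ((fun g => (A x * B x)⁻¹ * g) ∘ fun z => A x * z) =
        (fun g => (B x)⁻¹ * g) := by
      funext z; simp [Function.comp, mul_inv_rev, mul_assoc]
    rw [hfun]
  refine Eq.trans (b := mfderiv IG IG (fun g => (A x * B x)⁻¹ * g) (A x * B x)
          (mfderiv IG IG (fun z => z * B x) (A x) (mfderiv IM IG A x v) +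
           mfderiv IG IG (fun z => A x * z) (B x) (mfderiv IM IG B x v))) ?_ ?_
  · show mfderiv IG IG (fun g => (A x * B x)⁻¹ * g) (A x * B x)
      (mfderiv IM IG (fun r => A r * B r) x v) = _
    rw [mfderiv_binary IG IG IG IM (fun a b => a * b) (contMDiff_mul IG (⊤ : ℕ∞)) A B x hA hB v]
  · rw [map_add (mfderiv IG IG (fun g => (A x * B x)⁻¹ * g) (A x * B x)), hT1, hT2]
    exact rfl

/-- Reconstruction of a connection form along a map of the form `r ↦ δ (c r) (k r)`. -/
theorem conn_decomp
    {EG EP EM : Type*} [NormedAddCommGroup EG] [NormedSpace ℝ EG]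
    [NormedAddCommGroup EP] [NormedSpace ℝ EP] [NormedAddCommGroup EM] [NormedSpace ℝ EM]
    {G P M : Type*} [TopologicalSpace G] [ChartedSpace EG G] [Group G]
    [TopologicalSpace P] [ChartedSpace EP P] [TopologicalSpace M] [ChartedSpace EM M]
    (IG : ModelWithCorners ℝ EG EG) (IP : ModelWithCorners ℝ EP EP)
    (IM : ModelWithCorners ℝ EM EM) [LieGroup IG (⊤ : ℕ∞) G] [IsManifold IP (⊤ : ℕ∞) P]
    (δ : P → G → P) (hδ : ContMDiff (IP.prod IG) IP (⊤ : ℕ∞) (fun z : P × G => δ z.1 z.2))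
    (hδmul : ∀ (p : P) (a b : G), δ (δ p a) b = δ p (a * b))
    (ω : P → (EP →L[ℝ] EG))
    (hω1 : ∀ (p : P) (X : EG), ω p (fundVF IG IP δ X p) = X)
    (hω2 : ∀ (a : G) (p : P) (u : EP),
      ω (δ p a) (tDiff IP IP (fun r => δ r a) p u) = adjRep IG a⁻¹ (ω p u))
    (c : M → P) (k : M → G) (p : M)
    (hc : MDifferentiableAt IM IP c p) (hk : MDifferentiableAt IM IG k p) (u : EM) :
    ω (δ (c p) (k p)) (mfderiv IM IP (fun r => δ (c r) (k r)) p u) =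
      adjRep IG (k p)⁻¹ (ω (c p) (mfderiv IM IP c p u)) + leftLog IM IG k p u := by
  rw [mfderiv_binary IP IP IG IM δ hδ c k p hc hk u]
  erw [map_add (ω (δ (c p) (k p)))]
  have h2 := hω2 (k p) (c p) (mfderiv IM IP c p u)
  unfold tDiff at h2
  rw [h2]
  congr 1
  -- second term
  have hδq1 : MDifferentiableAt IG IP (fun z => δ (δ (c p) (k p)) z) (1 : G) := by
    have : ContMDiff IG IP (⊤ : ℕ∞) (fun z => δ (δ (c p) (k p)) z) :=
      hδ.comp (contMDiff_const.prodMk contMDiff_id)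
    exact (this _).mdifferentiableAt (by simp)
  have hml : MDifferentiableAt IG IG (fun z => (k p)⁻¹ * z) (k p) :=
    mdifferentiableAt_mul_left
  have hfun : (fun z => δ (c p) z) =
      (fun z => δ (δ (c p) (k p)) z) ∘ (fun z => (k p)⁻¹ * z) := by
    funext z
    simp only [Function.comp, hδmul, mul_inv_cancel_left]
  rw [hfun]
  have hcomp := mfderiv_comp_apply_of_eq (k p) hδq1 hml (inv_mul_cancel (k p))
    ((mfderiv IM IG k p) u)
  exact (congrArg (ω (δ (c p) (k p))) hcomp).trans
    (hω1 (δ (c p) (k p))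
      (mfderiv IG IG (fun z => (k p)⁻¹ * z) (k p) (mfderiv IM IG k p u)))

/-- Theorem 4.1, converse part: if `φ̄ω_α = Ad(h_α⁻¹).θ_α + h_α⁻¹dh_α` on each `U_α`,
then `ω` and `θ` are `(f, φ, id_B)`-related: `f*θ = φ̄ω`. -/
theorem local_condition_implies_related {ι : Type*}
    (IG : ModelWithCorners ℝ EG EG) (IH : ModelWithCorners ℝ EH EH)
    (IB : ModelWithCorners ℝ EB EB)
    (IP : ModelWithCorners ℝ EP EP) (IQ : ModelWithCorners ℝ EQ EQ)
    [LieGroup IG (⊤ : ℕ∞) G] [LieGroup IH (⊤ : ℕ∞) H] [IsManifold IB (⊤ : ℕ∞) B]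
    [IsManifold IP (⊤ : ℕ∞) P] [IsManifold IQ (⊤ : ℕ∞) Q]
    -- smooth free actions on P and Q, fiberwise transitive over the projections
    (δP : P → G → P) (δQ : Q → H → Q)
    (hδP : ContMDiff (IP.prod IG) IP (⊤ : ℕ∞) (fun z : P × G => δP z.1 z.2))
    (hδQ : ContMDiff (IQ.prod IH) IQ (⊤ : ℕ∞) (fun z : Q × H => δQ z.1 z.2))
    (hδP1 : ∀ p : P, δP p 1 = p)
    (hδPmul : ∀ (p : P) (a b : G), δP (δP p a) b = δP p (a * b))
    (hδQ1 : ∀ q : Q, δQ q 1 = q)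
    (hδQmul : ∀ (q : Q) (a b : H), δQ (δQ q a) b = δQ q (a * b))
    (hδPfree : ∀ (p : P) (a : G), δP p a = p → a = 1)
    (hδQfree : ∀ (q : Q) (a : H), δQ q a = q → a = 1)
    (πP : P → B) (πQ : Q → B)
    (hπP : ContMDiff IP IB (⊤ : ℕ∞) πP) (hπQ : ContMDiff IQ IB (⊤ : ℕ∞) πQ)
    (hπPδ : ∀ (p : P) (a : G), πP (δP p a) = πP p)
    (hπQδ : ∀ (q : Q) (a : H), πQ (δQ q a) = πQ q)
    -- the pb-morphism (f, φ, id_B)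
    (f : P → Q) (φ : G → H) (hf : ContMDiff IP IQ (⊤ : ℕ∞) f)
    (hφ : ContMDiff IG IH (⊤ : ℕ∞) φ) (hφmul : ∀ a b : G, φ (a * b) = φ a * φ b)
    (hπf : ∀ p : P, πQ (f p) = πP p)
    (hequiv : ∀ (p : P) (a : G), f (δP p a) = δQ (f p) (φ a))
    -- connection forms ω on P and θ on Q
    (ω : P → (EP →L[ℝ] EG)) (θ : Q → (EQ →L[ℝ] EH))
    (hω1 : ∀ (p : P) (X : EG), ω p (fundVF IG IP δP X p) = X)
    (hω2 : ∀ (a : G) (p : P) (u : EP),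
      ω (δP p a) (tDiff IP IP (fun r => δP r a) p u) = adjRep IG a⁻¹ (ω p u))
    (hθ1 : ∀ (q : Q) (X : EH), θ q (fundVF IH IQ δQ X q) = X)
    (hθ2 : ∀ (a : H) (q : Q) (u : EQ),
      θ (δQ q a) (tDiff IQ IQ (fun r => δQ r a) q u) = adjRep IH a⁻¹ (θ q u))
    -- trivializing data over a common open cover of B
    (U : ι → Set B) (hUopen : ∀ α, IsOpen (U α)) (hUcover : ⋃ α, U α = Set.univ)
    (s : ι → B → P) (hssmooth : ∀ α, ContMDiffOn IB IP (⊤ : ℕ∞) (s α) (U α))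
    (hsecP : ∀ α, ∀ x ∈ U α, πP (s α x) = x)
    (t : ι → B → Q) (htsmooth : ∀ α, ContMDiffOn IB IQ (⊤ : ℕ∞) (t α) (U α))
    (hsecQ : ∀ α, ∀ x ∈ U α, πQ (t α x) = x)
    (γ : ι → P → G)
    (hγ : ∀ α, ∀ p : P, πP p ∈ U α → p = δP (s α (πP p)) (γ α p))
    (hγsmooth : ∀ α, ContMDiffOn IP IG (⊤ : ℕ∞) (γ α) (πP ⁻¹' U α))
    (κ : ι → Q → H)
    (hκ : ∀ α, ∀ q : Q, πQ q ∈ U α → q = δQ (t α (πQ q)) (κ α q))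
    (hκsmooth : ∀ α, ContMDiffOn IQ IH (⊤ : ℕ∞) (κ α) (πQ ⁻¹' U α))
    (hα : ι → B → H) (hαsmooth : ∀ α, ContMDiffOn IB IH (⊤ : ℕ∞) (hα α) (U α))
    (hαdef : ∀ α, ∀ x ∈ U α, f (s α x) = δQ (t α x) (hα α x))
    -- the local condition
    (hloc : ∀ α, ∀ x ∈ U α, ∀ v : TangentSpace IB x,
      lieMorphDiff IG IH φ (ω (s α x) (tDiff IB IP (s α) x v)) =
        adjRep IH (hα α x)⁻¹ (θ (t α x) (tDiff IB IQ (t α) x v)) +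
          leftLog IB IH (hα α) x v) :
    ∀ (p : P) (u : EP),
      θ (f p) (tDiff IP IQ f p u) = lieMorphDiff IG IH φ (ω p u) := by
  intro p u
  obtain ⟨α, hxα⟩ := Set.mem_iUnion.mp (by rw [hUcover]; trivial : πP p ∈ ⋃ α, U α)
  -- differentiability bookkeeping
  have hmem : πP ⁻¹' U α ∈ nhds p :=
    ((hUopen α).preimage hπP.continuous).mem_nhds hxα
  have hmemB : U α ∈ nhds (πP p) := (hUopen α).mem_nhds hxα
  have hπd : MDifferentiableAt IP IB πP p := (hπP p).mdifferentiableAt (by simp)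
  have hγat : ContMDiffAt IP IG (⊤ : ℕ∞) (γ α) p := (hγsmooth α).contMDiffAt hmem
  have hγd : MDifferentiableAt IP IG (γ α) p := hγat.mdifferentiableAt (by simp)
  have hsd : MDifferentiableAt IB IP (s α) (πP p) :=
    ((hssmooth α).contMDiffAt hmemB).mdifferentiableAt (by simp)
  have htd : MDifferentiableAt IB IQ (t α) (πP p) :=
    ((htsmooth α).contMDiffAt hmemB).mdifferentiableAt (by simp)
  have hhat : ContMDiffAt IB IH (⊤ : ℕ∞) (hα α) (πP p) := (hαsmooth α).contMDiffAt hmemB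
  have hhd : MDifferentiableAt IB IH (hα α) (πP p) := hhat.mdifferentiableAt (by simp)
  have hcPd : MDifferentiableAt IP IP (fun r => s α (πP r)) p := hsd.comp p hπd
  have hcQd : MDifferentiableAt IP IQ (fun r => t α (πP r)) p := htd.comp p hπd
  have hhπd : MDifferentiableAt IP IH (fun r => hα α (πP r)) p := hhd.comp p hπd
  have hφγat : ContMDiffAt IP IH (⊤ : ℕ∞) (fun r => φ (γ α r)) p :=
    ContMDiffAt.comp p (hφ (γ α p)) hγat
  have hφγd : MDifferentiableAt IP IH (fun r => φ (γ α r)) p :=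
    hφγat.mdifferentiableAt (by simp)
  have hk0d : MDifferentiableAt IP IH (fun r => hα α (πP r) * φ (γ α r)) p :=
    ((ContMDiffAt.comp p hhat (hπP p)).mul hφγat).mdifferentiableAt (by simp)
  -- chain rules for the two "horizontal" parts
  have e2 : mfderiv IP IP (fun r => s α (πP r)) p =
      (mfderiv IB IP (s α) (πP p)).comp (mfderiv IP IB πP p) := by
    rw [show (fun r => s α (πP r)) = (s α) ∘ πP from rfl]
    exact mfderiv_comp p hsd hπd
  have e4 : mfderiv IP IQ (fun r => t α (πP r)) p =
      (mfderiv IB IQ (t α) (πP p)).comp (mfderiv IP IB πP p) := by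
    rw [show (fun r => t α (πP r)) = (t α) ∘ πP from rfl]
    exact mfderiv_comp p htd hπd
  -- Step A : reconstruction formula for ω at p
  have hA : ω p u = adjRep IG (γ α p)⁻¹
        (ω (s α (πP p)) (mfderiv IB IP (s α) (πP p) (mfderiv IP IB πP p u))) +
      leftLog IP IG (γ α) p u := by
    have hdecomp := conn_decomp IG IP IP δP hδP hδPmul ω hω1 hω2
      (fun r => s α (πP r)) (γ α) p hcPd hγd u
    have hfe : (fun r => δP (s α (πP r)) (γ α r)) =ᶠ[nhds p] id := by
      filter_upwards [hmem] with r hr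
      exact (hγ α r hr).symm
    have hpe : δP (s α (πP p)) (γ α p) = p := (hγ α p hxα).symm
    rw [hpe, hfe.mfderiv_eq, mfderiv_id, e2] at hdecomp
    exact hdecomp
  -- Step B : reconstruction formula for θ at f p
  have hfe2 : f =ᶠ[nhds p] (fun r => δQ (t α (πP r)) (hα α (πP r) * φ (γ α r))) := by
    filter_upwards [hmem] with r hr
    calc f r = f (δP (s α (πP r)) (γ α r)) := by rw [← hγ α r hr]
      _ = δQ (f (s α (πP r))) (φ (γ α r)) := hequiv _ _
      _ = δQ (δQ (t α (πP r)) (hα α (πP r))) (φ (γ α r)) := by rw [hαdef α (πP r) hr]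
      _ = δQ (t α (πP r)) (hα α (πP r) * φ (γ α r)) := hδQmul _ _ _
  have hfp : f p = δQ (t α (πP p)) (hα α (πP p) * φ (γ α p)) := hfe2.self_of_nhds
  have hB : θ (f p) (mfderiv IP IQ f p u) =
      adjRep IH (hα α (πP p) * φ (γ α p))⁻¹
        (θ (t α (πP p)) (mfderiv IB IQ (t α) (πP p) (mfderiv IP IB πP p u))) +
      leftLog IP IH (fun r => hα α (πP r) * φ (γ α r)) p u := by
    have hdecomp := conn_decomp IH IQ IP δQ hδQ hδQmul θ hθ1 hθ2
      (fun r => t α (πP r)) (fun r => hα α (πP r) * φ (γ α r)) p hcQd hk0d u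
    rw [e4] at hdecomp
    rw [hfp, hfe2.mfderiv_eq]
    exact hdecomp
  -- Step C : expand the logarithmic term of `k₀ = (hα ∘ π) · (φ ∘ γ)`
  have hC : leftLog IP IH (fun r => hα α (πP r) * φ (γ α r)) p u =
      adjRep IH (φ (γ α p))⁻¹ (leftLog IB IH (hα α) (πP p) (mfderiv IP IB πP p u)) +
      leftLog IP IH (fun r => φ (γ α r)) p u := by
    rw [leftLog_mul IH IP (fun r => hα α (πP r)) (fun r => φ (γ α r)) p hhπd hφγd u,
      leftLog_comp IH IP IB πP (hα α) p hπd hhd u]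
  -- Step D : push ω's reconstruction through φ̄ and use the local condition
  have hD : lieMorphDiff IG IH φ (ω p u) =
      adjRep IH (φ (γ α p))⁻¹
        (adjRep IH (hα α (πP p))⁻¹
            (θ (t α (πP p)) (mfderiv IB IQ (t α) (πP p) (mfderiv IP IB πP p u))) +
          leftLog IB IH (hα α) (πP p) (mfderiv IP IB πP p u)) +
      leftLog IP IH (fun r => φ (γ α r)) p u := by
    have hloc' := hloc α (πP p) hxα (mfderiv IP IB πP p u)
    unfold tDiff at hloc'
    rw [hA, lieMorphDiff_add IG IH φ,
      lieMorphDiff_adj IG IH φ hφ hφmul (γ α p)⁻¹,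
      lieMorphDiff_leftLog IG IH IP φ hφ hφmul (γ α) p hγd u,
      morph_inv φ hφmul (γ α p), hloc']
    rfl
  -- assemble everything
  show θ (f p) (mfderiv IP IQ f p u) = lieMorphDiff IG IH φ (ω p u)
  refine hB.trans ?_
  rw [hC, hD, adjRep_add IH (φ (γ α p))⁻¹,
    adjRep_mul IH (φ (γ α p))⁻¹ (hα α (πP p))⁻¹, ← mul_inv_rev, add_assoc]
end Lie
end
end
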